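/- Assume Σ_A is nonempty and let g : Σ_A → ℝ be continuous. Suppose there is an integer m ≥ 1 such that the Birkhoff sum g_m = Σ_{j=0}^{m−1} g∘σ_A^j satisfies inf_{ξ ∈ Σ_A} g_m(ξ) > 0. Then for all real numbers ρ₁ > ρ₂ > 0, (ρ₁ − ρ₂) · (inf_{ξ ∈ Σ_A} g_m(ξ))/m ≤ P_{σ_A}(−ρ₂·g) − P_{σ_A}(−ρ₁·g) ≤ (ρ₁ − ρ₂) · (sup_{ξ ∈ Σ_A} g_m(ξ))/m. Consequently, the function ρ ↦ P_{σ_A}(−ρ·g) is continuous and strictly decreasing on (0,∞) and tends to −∞ as ρ → ∞. -/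

import Mathlib

open scoped Classical

/-- The distance on the full shift space `Σ = ℕ → Fin k`:
`d(ξ,ξ') = exp(-(first index where they differ))`, and `0` if `ξ = ξ'`. -/
noncomputable def dSigma {k : ℕ} (ξ ξ' : ℕ → Fin k) : ℝ :=
  if ξ = ξ' then 0 else Real.exp (-(PiNat.firstDiff ξ ξ' : ℝ))

lemma dSigma_self {k : ℕ} (ξ : ℕ → Fin k) : dSigma ξ ξ = 0 := by simp [dSigma]

lemma dSigma_nonneg {k : ℕ} (ξ ξ' : ℕ → Fin k) : 0 ≤ dSigma ξ ξ' := by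
  unfold dSigma
  split
  · exact le_refl 0
  · positivity

/-- `(Σ, d_Σ)` as a metric space. -/
noncomputable instance sigmaMetricSpace (k : ℕ) : MetricSpace (ℕ → Fin k) where
  dist := dSigma
  dist_self := dSigma_self
  dist_comm ξ ξ' := by
    unfold dSigma
    rcases eq_or_ne ξ ξ' with h | h
    · simp [h]
    · simp [h, h.symm, PiNat.firstDiff_comm]
  dist_triangle x y z := by
    show dSigma x z ≤ dSigma x y + dSigma y z
    rcases eq_or_ne x y with hxy | hxy
    · subst hxy; rw [dSigma_self, zero_add]
    rcases eq_or_ne y z with hyz | hyz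
    · subst hyz; rw [dSigma_self, add_zero]
    rcases eq_or_ne x z with hxz | hxz
    · subst hxz; rw [dSigma_self]
      exact add_nonneg (dSigma_nonneg _ _) (dSigma_nonneg _ _)
    have hmin := PiNat.min_firstDiff_le x y z hxz
    unfold dSigma
    rw [if_neg hxz, if_neg hxy, if_neg hyz]
    have h1 : Real.exp (-(PiNat.firstDiff x z : ℝ)) ≤
        max (Real.exp (-(PiNat.firstDiff x y : ℝ)))
            (Real.exp (-(PiNat.firstDiff y z : ℝ))) := by
      rcases min_le_iff.1 hmin with h | h
      · exact le_max_of_le_left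
          (Real.exp_le_exp.2 (neg_le_neg (by exact_mod_cast h)))
      · exact le_max_of_le_right
          (Real.exp_le_exp.2 (neg_le_neg (by exact_mod_cast h)))
    refine h1.trans (max_le ?_ ?_)
    · linarith [(Real.exp_pos (-(PiNat.firstDiff y z : ℝ)))]
    · linarith [(Real.exp_pos (-(PiNat.firstDiff x y : ℝ)))]
  eq_of_dist_eq_zero := by
    intro x y h
    by_contra hne
    simp only [dSigma, if_neg hne] at h
    exact (Real.exp_pos _).ne' h

/-- The shift map `σ(ξ)(m) = ξ(m+1)` on `Σ = ℕ → Fin k`. -/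
def shift {k : ℕ} (ξ : ℕ → Fin k) : ℕ → Fin k := fun m => ξ (m + 1)

/-- The subshift of finite type `Σ_A` associated with a 0-1 matrix `A`:
sequences with `A (ξ (m+1)) (ξ m) = 1` for all `m`. -/
def SigmaA {k : ℕ} (A : Matrix (Fin k) (Fin k) ℕ) : Set (ℕ → Fin k) :=
  {ξ | ∀ m : ℕ, A (ξ (m + 1)) (ξ m) = 1}

/-- `σ_A`, the restriction of the shift to `Σ_A`. -/
def shiftA {k : ℕ} (A : Matrix (Fin k) (Fin k) ℕ) (ξ : SigmaA A) : SigmaA A :=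
  ⟨shift ξ.1, fun m => ξ.2 (m + 1)⟩

/-- The projection `π_{A,m}` sending `ξ ∈ Σ_A` to the word `(ξ(0), …, ξ(m-1))`. -/
def projWord {k : ℕ} (A : Matrix (Fin k) (Fin k) ℕ) (m : ℕ) (ξ : SigmaA A) :
    Fin m → Fin k := fun j => ξ.1 j

/-- The set `Σ_{A,m}` of admissible words of length `m`, as a finset. -/
noncomputable def words {k : ℕ} (A : Matrix (Fin k) (Fin k) ℕ) (m : ℕ) :
    Finset (Fin m → Fin k) :=
  Set.Finite.toFinset (Set.toFinite (Set.range (projWord A m)))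

/-- The Birkhoff sum `Σ_{j=0}^{m-1} g ∘ σ_A^j`. -/
noncomputable def birkhoff {k : ℕ} (A : Matrix (Fin k) (Fin k) ℕ)
    (g : SigmaA A → ℝ) (m : ℕ) (ξ : SigmaA A) : ℝ :=
  ∑ j ∈ Finset.range m, g ((shiftA A)^[j] ξ)

/-- `a_m(g) = log Σ_{w ∈ Σ_{A,m}} exp (sup of the Birkhoff sums over the fiber of w)`. -/
noncomputable def pressureSeq {k : ℕ} (A : Matrix (Fin k) (Fin k) ℕ)
    (g : SigmaA A → ℝ) (m : ℕ) : ℝ :=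
  Real.log (∑ w ∈ words A m,
    Real.exp (⨆ ξ : {ξ : SigmaA A // projWord A m ξ = w}, birkhoff A g m ξ.1))

/-- The topological pressure `P_{σ_A}(g) = lim_m a_m(g)/m`. -/
noncomputable def pressure {k : ℕ} (A : Matrix (Fin k) (Fin k) ℕ)
    (g : SigmaA A → ℝ) : ℝ :=
  Filter.limUnder Filter.atTop (fun m : ℕ => pressureSeq A g m / m)

/-- The cylinder `C_i = {ξ ∈ Σ_A | ξ(0) = i}`. -/
def cyl {k : ℕ} (A : Matrix (Fin k) (Fin k) ℕ) (i : Fin k) : Set (SigmaA A) :=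
  {ξ | ξ.1 0 = i}

/-- A function on `Σ_A` is Hölder continuous if there are `C > 0` and `α ∈ (0,1]`
with `|g ξ - g ξ'| ≤ C ⬝ d_Σ(ξ,ξ')^α` for all `ξ, ξ'`. -/
def IsHolder {k : ℕ} (A : Matrix (Fin k) (Fin k) ℕ) (g : SigmaA A → ℝ) : Prop :=
  ∃ C > (0:ℝ), ∃ α ∈ Set.Ioc (0:ℝ) 1,
    ∀ ξ ξ' : SigmaA A, |g ξ - g ξ'| ≤ C * dist ξ ξ' ^ α

namespace SFT
open Filter Real Finset

variable {k : ℕ} {A : Matrix (Fin k) (Fin k) ℕ}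

lemma shiftA_iterate_apply (p : ℕ) (ξ : SigmaA A) (i : ℕ) :
    ((shiftA A)^[p] ξ).1 i = ξ.1 (i + p) := by
  induction p generalizing ξ with
  | zero => rfl
  | succ p ih =>
    rw [Function.iterate_succ_apply, ih (shiftA A ξ)]
    rfl

lemma birkhoff_add (f : SigmaA A → ℝ) (p q : ℕ) (ξ : SigmaA A) :
    birkhoff A f (p + q) ξ = birkhoff A f p ξ + birkhoff A f q ((shiftA A)^[p] ξ) := by
  unfold birkhoff
  rw [Finset.sum_range_add]
  congr 1
  refine Finset.sum_congr rfl fun j _ => ?_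
  rw [add_comm p j, Function.iterate_add_apply]

lemma mem_words (n : ℕ) (ξ : SigmaA A) : projWord A n ξ ∈ words A n := by
  simp only [words, Set.Finite.mem_toFinset, Set.mem_range]
  exact ⟨ξ, rfl⟩

lemma fiber_nonempty {n : ℕ} {w : Fin n → Fin k} (hw : w ∈ words A n) :
    Nonempty {ξ : SigmaA A // projWord A n ξ = w} := by
  simp only [words, Set.Finite.mem_toFinset, Set.mem_range] at hw
  obtain ⟨ξ, h⟩ := hw
  exact ⟨⟨ξ, h⟩⟩

lemma abs_birkhoff_le {f : SigmaA A → ℝ} {B : ℝ} (hB : ∀ ξ, |f ξ| ≤ B) (n : ℕ) (ξ : SigmaA A) :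
    |birkhoff A f n ξ| ≤ n * B := by
  calc |∑ j ∈ Finset.range n, f ((shiftA A)^[j] ξ)|
      ≤ ∑ j ∈ Finset.range n, |f ((shiftA A)^[j] ξ)| := Finset.abs_sum_le_sum_abs _ _
    _ ≤ ∑ _j ∈ Finset.range n, B := Finset.sum_le_sum fun _ _ => hB _
    _ = n * B := by simp [mul_comm]

lemma bddAbove_fiber {f : SigmaA A → ℝ} {B : ℝ} (hB : ∀ ξ, |f ξ| ≤ B) (n : ℕ)
    (w : Fin n → Fin k) :
    BddAbove (Set.range fun ξ : {ξ : SigmaA A // projWord A n ξ = w} =>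
      birkhoff A f n ξ.1) := by
  refine ⟨n * B, ?_⟩
  rintro x ⟨ξ, rfl⟩
  exact (abs_le.1 (abs_birkhoff_le hB n ξ.1)).2

lemma projWord_castAdd (p q : ℕ) (ξ : SigmaA A) :
    (fun j => projWord A (p + q) ξ (Fin.castAdd q j)) = projWord A p ξ := by
  funext j
  simp [projWord]

lemma projWord_natAdd (p q : ℕ) (ξ : SigmaA A) :
    (fun j => projWord A (p + q) ξ (Fin.natAdd p j)) = projWord A q ((shiftA A)^[p] ξ) := by
  funext j
  simp [projWord, shiftA_iterate_apply, add_comm]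

end SFT
namespace SFT
open Filter Real Finset

variable {k : ℕ} {A : Matrix (Fin k) (Fin k) ℕ}

lemma words_nonempty (hne : (SigmaA A).Nonempty) (n : ℕ) : (words A n).Nonempty := by
  obtain ⟨ξ, hξ⟩ := hne
  exact ⟨projWord A n ⟨ξ, hξ⟩, mem_words n ⟨ξ, hξ⟩⟩

lemma sum_exp_pos (hne : (SigmaA A).Nonempty) (f : SigmaA A → ℝ) (n : ℕ) :
    0 < ∑ w ∈ words A n,
      Real.exp (⨆ ξ : {ξ : SigmaA A // projWord A n ξ = w}, birkhoff A f n ξ.1) :=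
  Finset.sum_pos (fun _ _ => Real.exp_pos _) (words_nonempty hne n)

lemma pressureSeq_le (hne : (SigmaA A).Nonempty) {f₁ f₂ : SigmaA A → ℝ} {B₂ : ℝ}
    (hB₂ : ∀ ξ, |f₂ ξ| ≤ B₂) {n : ℕ} {c : ℝ}
    (h : ∀ ξ, birkhoff A f₁ n ξ ≤ birkhoff A f₂ n ξ + c) :
    pressureSeq A f₁ n ≤ pressureSeq A f₂ n + c := by
  unfold pressureSeq
  have key : ∀ w ∈ words A n,
      Real.exp (⨆ ξ : {ξ : SigmaA A // projWord A n ξ = w}, birkhoff A f₁ n ξ.1)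
        ≤ Real.exp c *
          Real.exp (⨆ ξ : {ξ : SigmaA A // projWord A n ξ = w}, birkhoff A f₂ n ξ.1) := by
    intro w hw
    haveI := fiber_nonempty hw
    rw [← Real.exp_add]
    refine Real.exp_le_exp.2 ?_
    refine ciSup_le fun ξ => ?_
    refine (h ξ.1).trans ?_
    have := le_ciSup (bddAbove_fiber hB₂ n w) ξ
    linarith
  have h1 : (∑ w ∈ words A n,
      Real.exp (⨆ ξ : {ξ : SigmaA A // projWord A n ξ = w}, birkhoff A f₁ n ξ.1))
      ≤ Real.exp c * ∑ w ∈ words A n,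
      Real.exp (⨆ ξ : {ξ : SigmaA A // projWord A n ξ = w}, birkhoff A f₂ n ξ.1) := by
    rw [Finset.mul_sum]
    exact Finset.sum_le_sum key
  calc Real.log (∑ w ∈ words A n,
        Real.exp (⨆ ξ : {ξ : SigmaA A // projWord A n ξ = w}, birkhoff A f₁ n ξ.1))
      ≤ Real.log (Real.exp c * ∑ w ∈ words A n,
        Real.exp (⨆ ξ : {ξ : SigmaA A // projWord A n ξ = w}, birkhoff A f₂ n ξ.1)) :=
        Real.log_le_log (sum_exp_pos hne f₁ n) h1
    _ = _ + c := by
        rw [Real.log_mul (Real.exp_ne_zero c) (ne_of_gt (sum_exp_pos hne f₂ n)),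
          Real.log_exp]
        ring

lemma le_pressureSeq (hne : (SigmaA A).Nonempty) {f : SigmaA A → ℝ} {B : ℝ}
    (hB : ∀ ξ, |f ξ| ≤ B) (n : ℕ) :
    -((n : ℝ) * B) ≤ pressureSeq A f n := by
  obtain ⟨ξ₀, hξ₀⟩ := hne
  set ξ : SigmaA A := ⟨ξ₀, hξ₀⟩
  set w := projWord A n ξ with hw
  haveI : Nonempty {ξ' : SigmaA A // projWord A n ξ' = w} := ⟨⟨ξ, rfl⟩⟩
  have h1 : -((n : ℝ) * B) ≤ ⨆ ξ' : {ξ' : SigmaA A // projWord A n ξ' = w},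
      birkhoff A f n ξ'.1 := by
    refine le_trans ?_ (le_ciSup (bddAbove_fiber hB n w) (⟨ξ, rfl⟩ :
      {ξ' : SigmaA A // projWord A n ξ' = w}))
    exact neg_le_of_abs_le (abs_birkhoff_le hB n ξ)
  have h2 : Real.exp (⨆ ξ' : {ξ' : SigmaA A // projWord A n ξ' = w},
      birkhoff A f n ξ'.1) ≤ ∑ w' ∈ words A n,
      Real.exp (⨆ ξ' : {ξ' : SigmaA A // projWord A n ξ' = w'}, birkhoff A f n ξ'.1) :=
    Finset.single_le_sum (f := fun w' => Real.exp (⨆ ξ' : {ξ' : SigmaA A // projWord A n ξ' = w'},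
      birkhoff A f n ξ'.1)) (fun _ _ => (Real.exp_pos _).le) (mem_words n ξ)
  calc -((n : ℝ) * B) ≤ Real.log (Real.exp (⨆ ξ' : {ξ' : SigmaA A // projWord A n ξ' = w},
        birkhoff A f n ξ'.1)) := by rw [Real.log_exp]; exact h1
    _ ≤ pressureSeq A f n := Real.log_le_log (Real.exp_pos _) h2

end SFT
namespace SFT
open Filter Real Finset Topology

variable {k : ℕ} {A : Matrix (Fin k) (Fin k) ℕ}

lemma pressureSeq_subadditive (hne : (SigmaA A).Nonempty) {f : SigmaA A → ℝ} {B : ℝ}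
    (hB : ∀ ξ, |f ξ| ≤ B) : Subadditive (pressureSeq A f) := by
  intro p q
  classical
  set F : ∀ n : ℕ, (Fin n → Fin k) → ℝ := fun n w =>
    Real.exp (⨆ ξ : {ξ : SigmaA A // projWord A n ξ = w}, birkhoff A f n ξ.1) with hF
  set split : (Fin (p + q) → Fin k) → (Fin p → Fin k) × (Fin q → Fin k) := fun w =>
    (fun j => w (Fin.castAdd q j), fun j => w (Fin.natAdd p j)) with hsplit
  have key : ∀ w ∈ words A (p + q), F (p + q) w ≤ F p (split w).1 * F q (split w).2 := by
    intro w hw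
    haveI := fiber_nonempty hw
    rw [hF, ← Real.exp_add]
    refine Real.exp_le_exp.2 (ciSup_le ?_)
    rintro ⟨ξ, hξ⟩
    have h1 : projWord A p ξ = (split w).1 := by
      rw [hsplit, ← hξ]; exact (projWord_castAdd p q ξ).symm
    have h2 : projWord A q ((shiftA A)^[p] ξ) = (split w).2 := by
      rw [hsplit, ← hξ]; exact (projWord_natAdd p q ξ).symm
    rw [birkhoff_add]
    exact add_le_add (le_ciSup (bddAbove_fiber hB p _) ⟨ξ, h1⟩)
      (le_ciSup (bddAbove_fiber hB q _) ⟨(shiftA A)^[p] ξ, h2⟩)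
  have hinj : ∀ x ∈ words A (p + q), ∀ y ∈ words A (p + q), split x = split y → x = y := by
    intro x _ y _ hxy
    funext i
    refine Fin.addCases (motive := fun i => x i = y i) (fun j => ?_) (fun j => ?_) i
    · exact congrFun (congrArg Prod.fst hxy) j
    · exact congrFun (congrArg Prod.snd hxy) j
  have himg : (words A (p + q)).image split ⊆ words A p ×ˢ words A q := by
    intro x hx
    simp only [Finset.mem_image] at hx
    obtain ⟨w, hw, rfl⟩ := hx
    simp only [words, Set.Finite.mem_toFinset, Set.mem_range] at hw
    obtain ⟨ξ, rfl⟩ := hw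
    rw [Finset.mem_product]
    constructor
    · show (fun j => projWord A (p + q) ξ (Fin.castAdd q j)) ∈ words A p
      rw [projWord_castAdd p q ξ]; exact mem_words p ξ
    · show (fun j => projWord A (p + q) ξ (Fin.natAdd p j)) ∈ words A q
      rw [projWord_natAdd p q ξ]; exact mem_words q _
  have hsum : (∑ w ∈ words A (p + q), F (p + q) w)
      ≤ (∑ u ∈ words A p, F p u) * (∑ v ∈ words A q, F q v) := by
    calc (∑ w ∈ words A (p + q), F (p + q) w)
        ≤ ∑ w ∈ words A (p + q), F p (split w).1 * F q (split w).2 :=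
          Finset.sum_le_sum key
      _ = ∑ x ∈ (words A (p + q)).image split, F p x.1 * F q x.2 :=
          (Finset.sum_image (f := fun x : (Fin p → Fin k) × (Fin q → Fin k) => F p x.1 * F q x.2) hinj).symm
      _ ≤ ∑ x ∈ words A p ×ˢ words A q, F p x.1 * F q x.2 := by
          refine Finset.sum_le_sum_of_subset_of_nonneg himg fun x _ _ => ?_
          positivity
      _ = _ := by rw [Finset.sum_product, ← Finset.sum_mul_sum]
  have h1 : pressureSeq A f (p + q) ≤ Real.log
      ((∑ u ∈ words A p, F p u) * (∑ v ∈ words A q, F q v)) :=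
    Real.log_le_log (sum_exp_pos hne f (p + q)) hsum
  rw [Real.log_mul (ne_of_gt (sum_exp_pos hne f p)) (ne_of_gt (sum_exp_pos hne f q))] at h1
  exact h1

lemma tendsto_pressureSeq (hne : (SigmaA A).Nonempty) {f : SigmaA A → ℝ} {B : ℝ}
    (hB : ∀ ξ, |f ξ| ≤ B) :
    Tendsto (fun n : ℕ => pressureSeq A f n / n) atTop (𝓝 (pressure A f)) := by
  have hsub := pressureSeq_subadditive hne hB
  have hbdd : BddBelow (Set.range fun n : ℕ => pressureSeq A f n / n) := by
    refine ⟨min (-B) 0, ?_⟩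
    rintro x ⟨n, rfl⟩
    rcases Nat.eq_zero_or_pos n with hn | hn
    · subst hn
      simp only [Nat.cast_zero, div_zero]
      exact min_le_right _ _
    · have h1 := le_pressureSeq hne hB n
      have hn' : (0 : ℝ) < n := by exact_mod_cast hn
      refine le_trans (min_le_left _ _) ?_
      rw [le_div_iff₀ hn']
      nlinarith
  have ht := hsub.tendsto_lim hbdd
  have : pressure A f = hsub.lim := by
    unfold pressure
    exact ht.limUnder_eq
  rw [this]
  exact ht

end SFT
namespace SFT
open Filter Real Finset Topology

variable {k : ℕ} {A : Matrix (Fin k) (Fin k) ℕ}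

lemma isClosed_sigmaA : IsClosed (SigmaA A) := by
  have h : SigmaA A = ⋂ m : ℕ,
      (fun ξ : ℕ → Fin k => (ξ (m + 1), ξ m)) ⁻¹' {p : Fin k × Fin k | A p.1 p.2 = 1} := by
    ext ξ
    simp [SigmaA, Set.mem_iInter]
  rw [h]
  exact isClosed_iInter fun m =>
    IsClosed.preimage ((continuous_apply (m + 1)).prodMk (continuous_apply m))
      (isClosed_discrete _)

lemma exists_bound (g : SigmaA A → ℝ) (hg : Continuous g) :
    ∃ B : ℝ, 0 ≤ B ∧ ∀ ξ, |g ξ| ≤ B := by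
  haveI : CompactSpace (SigmaA A) :=
    isCompact_iff_compactSpace.mp isClosed_sigmaA.isCompact
  have hc : IsCompact (Set.range fun ξ : SigmaA A => |g ξ|) := isCompact_range hg.abs
  obtain ⟨B, hB⟩ := hc.bddAbove
  exact ⟨max B 0, le_max_right _ _,
    fun ξ => le_trans (hB (Set.mem_range_self ξ)) (le_max_left _ _)⟩

lemma birkhoff_mul_lower {g : SigmaA A → ℝ} {m : ℕ} {I : ℝ}
    (hIle : ∀ ξ, I ≤ birkhoff A g m ξ) :
    ∀ (q : ℕ) (ξ : SigmaA A), (q : ℝ) * I ≤ birkhoff A g (m * q) ξ := by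
  intro q
  induction q with
  | zero => intro ξ; simp [birkhoff]
  | succ q ih =>
    intro ξ
    have h := ih ξ
    have hmq : m * (q + 1) = m * q + m := by ring
    rw [hmq, birkhoff_add]
    have h2 := hIle ((shiftA A)^[m * q] ξ)
    push_cast
    linarith

lemma birkhoff_mul_upper {g : SigmaA A → ℝ} {m : ℕ} {S : ℝ}
    (hleS : ∀ ξ, birkhoff A g m ξ ≤ S) :
    ∀ (q : ℕ) (ξ : SigmaA A), birkhoff A g (m * q) ξ ≤ (q : ℝ) * S := by
  intro q
  induction q with
  | zero => intro ξ; simp [birkhoff]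
  | succ q ih =>
    intro ξ
    have h := ih ξ
    have hmq : m * (q + 1) = m * q + m := by ring
    rw [hmq, birkhoff_add]
    have h2 := hleS ((shiftA A)^[m * q] ξ)
    push_cast
    linarith

lemma birkhoff_lower {g : SigmaA A → ℝ} {B : ℝ} {m : ℕ} {I : ℝ} (hm : 1 ≤ m)
    (hB : ∀ ξ, |g ξ| ≤ B) (hB0 : 0 ≤ B)
    (hIle : ∀ ξ, I ≤ birkhoff A g m ξ) (hI0 : 0 < I) (n : ℕ) (ξ : SigmaA A) :
    (n : ℝ) * I / m - (I + m * B) ≤ birkhoff A g n ξ := by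
  have hn' : n = m * (n / m) + n % m := (Nat.div_add_mod n m).symm
  set q := n / m with hq
  set r := n % m with hr
  have hrm : r < m := Nat.mod_lt _ (by omega)
  have hsplit : birkhoff A g n ξ =
      birkhoff A g (m * q) ξ + birkhoff A g r ((shiftA A)^[m * q] ξ) := by
    rw [hn', birkhoff_add]
  have h1 : (q : ℝ) * I ≤ birkhoff A g (m * q) ξ := birkhoff_mul_lower hIle q ξ
  have h2 : -((m : ℝ) * B) ≤ birkhoff A g r ((shiftA A)^[m * q] ξ) := by
    have h3 := neg_le_of_abs_le (abs_birkhoff_le hB r ((shiftA A)^[m * q] ξ))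
    have h4 : (r : ℝ) ≤ m := by exact_mod_cast hrm.le
    nlinarith
  have hc : (m : ℝ) * q + r = n := by exact_mod_cast hn'.symm
  have hrm' : (r : ℝ) < m := by exact_mod_cast hrm
  have hm' : (0 : ℝ) < m := by exact_mod_cast hm
  have hq' : (n : ℝ) * I / m - I ≤ q * I := by
    rw [sub_le_iff_le_add, div_le_iff₀ hm']
    nlinarith [mul_nonneg hI0.le (by linarith : (0 : ℝ) ≤ (m : ℝ) - r)]
  linarith [hsplit, h1, h2, hq']

lemma birkhoff_upper {g : SigmaA A → ℝ} {B : ℝ} {m : ℕ} {S : ℝ} (hm : 1 ≤ m)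
    (hB : ∀ ξ, |g ξ| ≤ B) (hB0 : 0 ≤ B)
    (hleS : ∀ ξ, birkhoff A g m ξ ≤ S) (hS0 : 0 < S) (n : ℕ) (ξ : SigmaA A) :
    birkhoff A g n ξ ≤ (n : ℝ) * S / m + m * B := by
  have hn' : n = m * (n / m) + n % m := (Nat.div_add_mod n m).symm
  set q := n / m with hq
  set r := n % m with hr
  have hrm : r < m := Nat.mod_lt _ (by omega)
  have hsplit : birkhoff A g n ξ =
      birkhoff A g (m * q) ξ + birkhoff A g r ((shiftA A)^[m * q] ξ) := by
    rw [hn', birkhoff_add]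
  have h1 : birkhoff A g (m * q) ξ ≤ (q : ℝ) * S := birkhoff_mul_upper hleS q ξ
  have h2 : birkhoff A g r ((shiftA A)^[m * q] ξ) ≤ (m : ℝ) * B := by
    have h3 := le_of_abs_le (abs_birkhoff_le hB r ((shiftA A)^[m * q] ξ))
    have h4 : (r : ℝ) ≤ m := by exact_mod_cast hrm.le
    nlinarith
  have hc : (m : ℝ) * q + r = n := by exact_mod_cast hn'.symm
  have hr0 : (0 : ℝ) ≤ r := by positivity
  have hm' : (0 : ℝ) < m := by exact_mod_cast hm
  have hq' : (q : ℝ) * S ≤ (n : ℝ) * S / m := by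
    rw [le_div_iff₀ hm']
    nlinarith [mul_nonneg hS0.le hr0]
  linarith [hsplit, h1, h2, hq']

end SFT
namespace SFT
open Filter Real Finset Topology

variable {k : ℕ} {A : Matrix (Fin k) (Fin k) ℕ}

lemma birkhoff_smul (c : ℝ) (g : SigmaA A → ℝ) (n : ℕ) (ξ : SigmaA A) :
    birkhoff A (fun ξ' => c * g ξ') n ξ = c * birkhoff A g n ξ := by
  simp [birkhoff, Finset.mul_sum]

lemma abs_bound_smul {g : SigmaA A → ℝ} {B : ℝ} (hB : ∀ ξ, |g ξ| ≤ B) (c : ℝ) :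
    ∀ ξ, |(fun ξ' => c * g ξ') ξ| ≤ |c| * B := by
  intro ξ
  rw [abs_mul]
  exact mul_le_mul_of_nonneg_left (hB ξ) (abs_nonneg c)

lemma pressure_diff (hne : (SigmaA A).Nonempty) {g : SigmaA A → ℝ} {B : ℝ}
    (hB0 : 0 ≤ B) (hB : ∀ ξ, |g ξ| ≤ B) {m : ℕ} (hm : 1 ≤ m)
    (hpos : 0 < ⨅ ξ : SigmaA A, birkhoff A g m ξ)
    {ρ₁ ρ₂ : ℝ} (h2 : 0 < ρ₂) (h12 : ρ₂ < ρ₁) :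
    (ρ₁ - ρ₂) * (⨅ ξ : SigmaA A, birkhoff A g m ξ) / m ≤
        pressure A (fun ξ => -ρ₂ * g ξ) - pressure A (fun ξ => -ρ₁ * g ξ) ∧
    pressure A (fun ξ => -ρ₂ * g ξ) - pressure A (fun ξ => -ρ₁ * g ξ) ≤
        (ρ₁ - ρ₂) * (⨆ ξ : SigmaA A, birkhoff A g m ξ) / m := by
  haveI : Nonempty (SigmaA A) := hne.to_subtype
  have hbddb : BddBelow (Set.range (birkhoff A g m)) := by
    refine ⟨-((m : ℝ) * B), ?_⟩
    rintro x ⟨ξ, rfl⟩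
    exact neg_le_of_abs_le (abs_birkhoff_le hB m ξ)
  have hbdda : BddAbove (Set.range (birkhoff A g m)) := by
    refine ⟨(m : ℝ) * B, ?_⟩
    rintro x ⟨ξ, rfl⟩
    exact le_of_abs_le (abs_birkhoff_le hB m ξ)
  set I := ⨅ ξ : SigmaA A, birkhoff A g m ξ with hI
  set S := ⨆ ξ : SigmaA A, birkhoff A g m ξ with hS
  have hIle : ∀ ξ, I ≤ birkhoff A g m ξ := fun ξ => ciInf_le hbddb ξ
  have hleS : ∀ ξ, birkhoff A g m ξ ≤ S := fun ξ => le_ciSup hbdda ξ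
  obtain ⟨ξ₀⟩ := (inferInstance : Nonempty (SigmaA A))
  have hS0 : 0 < S := lt_of_lt_of_le hpos ((hIle ξ₀).trans (hleS ξ₀))
  set δ := ρ₁ - ρ₂ with hδ
  have hδ0 : 0 < δ := by simp [hδ]; linarith
  set f₁ : SigmaA A → ℝ := fun ξ => -ρ₁ * g ξ with hf₁
  set f₂ : SigmaA A → ℝ := fun ξ => -ρ₂ * g ξ with hf₂
  have hB₁ : ∀ ξ, |f₁ ξ| ≤ |(-ρ₁)| * B := abs_bound_smul hB (-ρ₁)
  have hB₂ : ∀ ξ, |f₂ ξ| ≤ |(-ρ₂)| * B := abs_bound_smul hB (-ρ₂)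
  have hm' : (0 : ℝ) < m := by exact_mod_cast hm
  -- level-n inequalities
  have e₁ : ∀ n : ℕ, pressureSeq A f₁ n ≤
      pressureSeq A f₂ n + (-(δ * ((n : ℝ) * I / m - (I + m * B)))) := by
    intro n
    refine pressureSeq_le hne hB₂ fun ξ => ?_
    rw [hf₁, hf₂, birkhoff_smul, birkhoff_smul]
    have hL := birkhoff_lower hm hB hB0 hIle hpos n ξ
    have := mul_le_mul_of_nonneg_left hL hδ0.le
    nlinarith [this]
  have e₂ : ∀ n : ℕ, pressureSeq A f₂ n ≤
      pressureSeq A f₁ n + (δ * ((n : ℝ) * S / m + m * B)) := by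
    intro n
    refine pressureSeq_le hne hB₁ fun ξ => ?_
    rw [hf₁, hf₂, birkhoff_smul, birkhoff_smul]
    have hU := birkhoff_upper hm hB hB0 hleS hS0 n ξ
    have := mul_le_mul_of_nonneg_left hU hδ0.le
    nlinarith [this]
  have T₁ := tendsto_pressureSeq hne hB₁
  have T₂ := tendsto_pressureSeq hne hB₂
  have Tc : ∀ C : ℝ, Tendsto (fun n : ℕ => C / n) atTop (𝓝 0) :=
    fun C => tendsto_const_div_atTop_nhds_zero_nat C
  constructor
  · -- δ * I / m ≤ P₂ - P₁
    have ev : (fun n : ℕ => pressureSeq A f₁ n / n + δ * I / m) ≤ᶠ[atTop]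
        fun n : ℕ => pressureSeq A f₂ n / n + δ * (I + m * B) / n := by
      filter_upwards [eventually_ge_atTop 1] with n hn
      have hn' : (0 : ℝ) < n := by exact_mod_cast hn
      have hne0 : (n : ℝ) ≠ 0 := hn'.ne'
      have h' : pressureSeq A f₁ n + δ * I / m * n ≤
          pressureSeq A f₂ n + δ * (I + m * B) := by
        have h'' := e₁ n
        have hring : -(δ * ((n : ℝ) * I / m - (I + m * B))) =
            δ * (I + m * B) - δ * I / m * n := by ring
        rw [hring] at h''
        linarith
      calc pressureSeq A f₁ n / n + δ * I / m
          = pressureSeq A f₁ n / n + (δ * I / m * n) / n := by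
            rw [mul_div_cancel_right₀ _ hne0]
        _ = (pressureSeq A f₁ n + δ * I / m * n) / n := (add_div _ _ _).symm
        _ ≤ (pressureSeq A f₂ n + δ * (I + m * B)) / n := by gcongr
        _ = pressureSeq A f₂ n / n + δ * (I + m * B) / n := add_div _ _ _
    have hlim := le_of_tendsto_of_tendsto (T₁.add tendsto_const_nhds)
      (T₂.add (Tc (δ * (I + m * B)))) ev
    rw [add_zero] at hlim
    have : δ * I / m ≤ pressure A f₂ - pressure A f₁ := by linarith
    simpa [hδ, hf₁, hf₂] using this
  · -- P₂ - P₁ ≤ δ * S / m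
    have ev : (fun n : ℕ => pressureSeq A f₂ n / n) ≤ᶠ[atTop]
        fun n : ℕ => pressureSeq A f₁ n / n + δ * S / m + δ * (m * B) / n := by
      filter_upwards [eventually_ge_atTop 1] with n hn
      have hn' : (0 : ℝ) < n := by exact_mod_cast hn
      have hne0 : (n : ℝ) ≠ 0 := hn'.ne'
      have h' : pressureSeq A f₂ n ≤
          pressureSeq A f₁ n + δ * S / m * n + δ * (m * B) := by
        have h'' := e₂ n
        have hring : δ * ((n : ℝ) * S / m + m * B) =
            δ * S / m * n + δ * (m * B) := by ring
        rw [hring] at h''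
        linarith
      calc pressureSeq A f₂ n / n
          ≤ (pressureSeq A f₁ n + δ * S / m * n + δ * (m * B)) / n := by gcongr
        _ = (pressureSeq A f₁ n + δ * S / m * n) / n + δ * (m * B) / n := add_div _ _ _
        _ = pressureSeq A f₁ n / n + (δ * S / m * n) / n + δ * (m * B) / n := by
            rw [add_div]
        _ = pressureSeq A f₁ n / n + δ * S / m + δ * (m * B) / n := by
            rw [mul_div_cancel_right₀ _ hne0]
    have hlim := le_of_tendsto_of_tendsto T₂
      ((T₁.add tendsto_const_nhds).add (Tc (δ * (m * B)))) ev
    rw [add_zero] at hlim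
    have : pressure A f₂ - pressure A f₁ ≤ δ * S / m := by linarith
    simpa [hδ, hf₁, hf₂] using this

end SFT
theorem statement_6 (k : ℕ) (hk : 1 ≤ k) (A : Matrix (Fin k) (Fin k) ℕ)
    (hA : ∀ i j, A i j = 0 ∨ A i j = 1) (hne : (SigmaA A).Nonempty)
    (g : SigmaA A → ℝ) (hg : Continuous g)
    (m : ℕ) (hm : 1 ≤ m) (hpos : 0 < ⨅ ξ : SigmaA A, birkhoff A g m ξ) :
    (∀ ρ₁ ρ₂ : ℝ, 0 < ρ₂ → ρ₂ < ρ₁ →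
      (ρ₁ - ρ₂) * (⨅ ξ : SigmaA A, birkhoff A g m ξ) / m ≤
          pressure A (fun ξ => -ρ₂ * g ξ) - pressure A (fun ξ => -ρ₁ * g ξ) ∧
      pressure A (fun ξ => -ρ₂ * g ξ) - pressure A (fun ξ => -ρ₁ * g ξ) ≤
          (ρ₁ - ρ₂) * (⨆ ξ : SigmaA A, birkhoff A g m ξ) / m) ∧
    ContinuousOn (fun ρ : ℝ => pressure A (fun ξ => -ρ * g ξ)) (Set.Ioi 0) ∧
    StrictAntiOn (fun ρ : ℝ => pressure A (fun ξ => -ρ * g ξ)) (Set.Ioi 0) ∧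
    Filter.Tendsto (fun ρ : ℝ => pressure A (fun ξ => -ρ * g ξ))
      Filter.atTop Filter.atBot := by
  obtain ⟨B, hB0, hB⟩ := SFT.exists_bound g hg
  have main : ∀ ρ₁ ρ₂ : ℝ, 0 < ρ₂ → ρ₂ < ρ₁ →
      (ρ₁ - ρ₂) * (⨅ ξ : SigmaA A, birkhoff A g m ξ) / m ≤
        pressure A (fun ξ => -ρ₂ * g ξ) - pressure A (fun ξ => -ρ₁ * g ξ) ∧
      pressure A (fun ξ => -ρ₂ * g ξ) - pressure A (fun ξ => -ρ₁ * g ξ) ≤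
        (ρ₁ - ρ₂) * (⨆ ξ : SigmaA A, birkhoff A g m ξ) / m :=
    fun ρ₁ ρ₂ h2 h12 => SFT.pressure_diff hne hB0 hB hm hpos h2 h12
  haveI : Nonempty (SigmaA A) := hne.to_subtype
  have hbddb : BddBelow (Set.range (birkhoff A g m)) := by
    refine ⟨-((m : ℝ) * B), ?_⟩
    rintro x ⟨ξ, rfl⟩
    exact neg_le_of_abs_le (SFT.abs_birkhoff_le hB m ξ)
  have hbdda : BddAbove (Set.range (birkhoff A g m)) := by
    refine ⟨(m : ℝ) * B, ?_⟩
    rintro x ⟨ξ, rfl⟩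
    exact le_of_abs_le (SFT.abs_birkhoff_le hB m ξ)
  obtain ⟨ξ₀⟩ := ‹Nonempty (SigmaA A)›
  have hS0 : 0 < ⨆ ξ : SigmaA A, birkhoff A g m ξ :=
    lt_of_lt_of_le hpos ((ciInf_le hbddb ξ₀).trans (le_ciSup hbdda ξ₀))
  have hm' : (0 : ℝ) < m := by exact_mod_cast hm
  refine ⟨main, ?_, ?_, ?_⟩
  · -- continuity
    have hK : (0 : ℝ) ≤ (⨆ ξ : SigmaA A, birkhoff A g m ξ) / m := by positivity
    refine LipschitzOnWith.continuousOn
      (K := Real.toNNReal ((⨆ ξ : SigmaA A, birkhoff A g m ξ) / m)) ?_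
    apply LipschitzOnWith.of_dist_le_mul
    intro x hx y hy
    rw [Real.coe_toNNReal _ hK, Real.dist_eq, Real.dist_eq]
    rcases lt_trichotomy x y with h | h | h
    · have h1 := (main y x hx h).1
      have h2 := (main y x hx h).2
      have hge : 0 ≤ pressure A (fun ξ => -x * g ξ) - pressure A (fun ξ => -y * g ξ) := by
        refine le_trans ?_ h1
        have : 0 < y - x := sub_pos.2 h
        positivity
      rw [abs_of_nonneg hge, abs_sub_comm, abs_of_nonneg (sub_pos.2 h).le]
      have hrw : ((y - x) * ⨆ ξ : SigmaA A, birkhoff A g m ξ) / ↑m =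
          (⨆ ξ : SigmaA A, birkhoff A g m ξ) / ↑m * (y - x) := by ring
      linarith [h2, hrw.le, hrw.ge]
    · subst h; simp
    · have h1 := (main x y hy h).1
      have h2 := (main x y hy h).2
      have hge : 0 ≤ pressure A (fun ξ => -y * g ξ) - pressure A (fun ξ => -x * g ξ) := by
        refine le_trans ?_ h1
        have : 0 < x - y := sub_pos.2 h
        positivity
      rw [abs_sub_comm, abs_of_nonneg hge, abs_of_nonneg (sub_pos.2 h).le]
      have hrw : ((x - y) * ⨆ ξ : SigmaA A, birkhoff A g m ξ) / ↑m =
          (⨆ ξ : SigmaA A, birkhoff A g m ξ) / ↑m * (x - y) := by ring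
      linarith [h2, hrw.le, hrw.ge]
  · -- strict antitone
    intro x hx y hy hxy
    have h1 := (main y x hx hxy).1
    have h0 : 0 < (y - x) * (⨅ ξ : SigmaA A, birkhoff A g m ξ) / m :=
      div_pos (mul_pos (sub_pos.2 hxy) hpos) hm'
    simp only
    linarith
  · -- tendsto atBot
    have hIm : 0 < (⨅ ξ : SigmaA A, birkhoff A g m ξ) / m := div_pos hpos hm'
    have hev : ∀ᶠ ρ : ℝ in Filter.atTop,
        pressure A (fun ξ => -ρ * g ξ) ≤
          pressure A (fun ξ => -(1 : ℝ) * g ξ) -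
            (ρ - 1) * ((⨅ ξ : SigmaA A, birkhoff A g m ξ) / m) := by
      filter_upwards [Filter.eventually_gt_atTop 1] with ρ hρ
      have h1 := (main ρ 1 one_pos hρ).1
      have hrw : ((ρ - 1) * ⨅ ξ : SigmaA A, birkhoff A g m ξ) / ↑m =
          (ρ - 1) * ((⨅ ξ : SigmaA A, birkhoff A g m ξ) / ↑m) := by ring
      linarith [h1, hrw.le, hrw.ge]
    refine Filter.tendsto_atBot_mono' Filter.atTop hev ?_
    have h1 : Filter.Tendsto (fun ρ : ℝ => ρ - 1) Filter.atTop Filter.atTop :=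
      Filter.tendsto_atTop_add_const_right _ (-1) Filter.tendsto_id |>.congr
        fun x => (sub_eq_add_neg x 1).symm
    have h2 : Filter.Tendsto
        (fun ρ : ℝ => (ρ - 1) * ((⨅ ξ : SigmaA A, birkhoff A g m ξ) / m))
        Filter.atTop Filter.atTop := h1.atTop_mul_const hIm
    have h3 : Filter.Tendsto
        (fun ρ : ℝ => -((ρ - 1) * ((⨅ ξ : SigmaA A, birkhoff A g m ξ) / m)))
        Filter.atTop Filter.atBot := Filter.tendsto_neg_atTop_atBot.comp h2
    have h4 := Filter.tendsto_atBot_add_const_left Filter.atTop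
      (pressure A (fun ξ => -(1 : ℝ) * g ξ)) h3
    refine h4.congr fun ρ => ?_
    ring
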